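/- Let R be a commutative ring and J an ideal of R with 2 ∈ J, and consider the ideals Ĩ and I of the group ring R[ℤ/2ℤ] defined from J. Fix n ≥ 1, and consider the isomorphisms of additive groups Ĩⁿ/Ĩⁿ⁺¹ ≅ (Jⁿ/Jⁿ⁺¹) × (Jⁿ/Jⁿ⁺¹) induced by (π₀, π₁), Iⁿ/Iⁿ⁺¹ ≅ (Jⁿ/Jⁿ⁺¹) × (Jⁿ⁻¹/Jⁿ) induced by (ε, π₀), and Ĩⁿ⁻¹/Ĩⁿ ≅ (Jⁿ⁻¹/Jⁿ) × (Jⁿ⁻¹/Jⁿ) induced by (π₀, π₁). Under these identifications, the map Ĩⁿ/Ĩⁿ⁺¹ → Iⁿ/Iⁿ⁺¹ induced by the inclusion Ĩⁿ ⊆ Iⁿ is given by (u, v) ↦ (u + v, 0), and the map Iⁿ/Iⁿ⁺¹ → Ĩⁿ⁻¹/Ĩⁿ induced by the inclusion Iⁿ ⊆ Ĩⁿ⁻¹ is given by (u, v) ↦ (v, v). -/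

import Mathlib

/-- The two-element group `ℤ/2ℤ` (written multiplicatively). -/
abbrev G2 : Type := Multiplicative (ZMod 2)

/-- The identity element of `ℤ/2ℤ`. -/
def g0 : G2 := Multiplicative.ofAdd (0 : ZMod 2)

/-- The nontrivial element of `ℤ/2ℤ`. -/
def g1 : G2 := Multiplicative.ofAdd (1 : ZMod 2)

/-- The group ring `R[ℤ/2ℤ]`. -/
abbrev GroupRing (R : Type*) [CommRing R] : Type _ := MonoidAlgebra R G2

/-- The coefficient `π₀(x)` of `x ∈ R[ℤ/2ℤ]` at the identity element. -/
def pi0 {R : Type*} [CommRing R] (x : GroupRing R) : R := x.coeff g0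

/-- The coefficient `π₁(x)` of `x ∈ R[ℤ/2ℤ]` at the nontrivial element. -/
def pi1 {R : Type*} [CommRing R] (x : GroupRing R) : R := x.coeff g1

/-- The augmentation ring homomorphism `ε : R[ℤ/2ℤ] → R`. -/
noncomputable def aug (R : Type*) [CommRing R] : GroupRing R →+* R :=
  ((MonoidAlgebra.lift R R G2) 1).toRingHom

lemma univ_G2 : (Finset.univ : Finset G2) = {g0, g1} := by decide

/-- The augmentation is `ε(x) = π₀(x) + π₁(x)`. -/
lemma aug_apply {R : Type*} [CommRing R] (x : GroupRing R) :
    aug R x = pi0 x + pi1 x := by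
  classical
  show ((MonoidAlgebra.lift R R G2) (1 : G2 →* R)) x = x.coeff g0 + x.coeff g1
  rw [MonoidAlgebra.lift_apply]
  simp only [MonoidHom.one_apply, smul_eq_mul, mul_one]
  rw [Finsupp.sum_fintype _ _ (fun _ => rfl), univ_G2,
    Finset.sum_insert (by decide), Finset.sum_singleton]

lemma g0_or_g1 (a : G2) : a = g0 ∨ a = g1 := by revert a; decide

lemma mul_coeff_mem {R : Type*} [CommRing R] (J : Ideal R) (c x : GroupRing R)
    (hx : ∀ a : G2, x.coeff a ∈ J) (g : G2) : (c * x).coeff g ∈ J := by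
  classical
  rw [MonoidAlgebra.coeff_mul]
  refine Ideal.sum_mem _ fun a₁ _ => Ideal.sum_mem _ fun a₂ _ => ?_
  dsimp only
  split_ifs
  · exact Ideal.mul_mem_left _ _ (hx a₂)
  · exact J.zero_mem

/-- The ideal `Ĩ := {x | π₀(x) ∈ J and π₁(x) ∈ J}` of the group ring `R[ℤ/2ℤ]`. -/
def Itilde {R : Type*} [CommRing R] (J : Ideal R) : Ideal (GroupRing R) where
  carrier := {x | pi0 x ∈ J ∧ pi1 x ∈ J}
  zero_mem' := by
    constructor <;> simp [pi0, pi1]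
  add_mem' := by
    intro x y hx hy
    exact ⟨by simpa [pi0] using J.add_mem hx.1 hy.1,
      by simpa [pi1] using J.add_mem hx.2 hy.2⟩
  smul_mem' := by
    intro c x hx
    have hall : ∀ a : G2, x.coeff a ∈ J := by
      intro a
      rcases g0_or_g1 a with h | h
      · rw [h]; exact hx.1
      · rw [h]; exact hx.2
    exact ⟨by simpa [pi0, smul_eq_mul] using mul_coeff_mem J c x hall g0,
      by simpa [pi1, smul_eq_mul] using mul_coeff_mem J c x hall g1⟩

/-- The ideal `I := ε⁻¹(J)` of the group ring `R[ℤ/2ℤ]`. -/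
noncomputable def Iaug {R : Type*} [CommRing R] (J : Ideal R) : Ideal (GroupRing R) :=
  J.comap (aug R)

lemma mem_Iaug {R : Type*} [CommRing R] (J : Ideal R) (x : GroupRing R) :
    x ∈ Iaug J ↔ pi0 x + pi1 x ∈ J := by
  rw [Iaug, Ideal.mem_comap, aug_apply]


section Aux
variable {R : Type*} [CommRing R]

lemma g0_ne_g1 : g0 ≠ g1 := by decide

lemma decomp (x : GroupRing R) :
    x = MonoidAlgebra.single g0 (pi0 x) + MonoidAlgebra.single g1 (pi1 x) := by
  classical
  ext a
  rw [MonoidAlgebra.coeff_add, Finsupp.add_apply]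
  rcases g0_or_g1 a with h | h <;> subst h <;>
    simp [pi0, pi1, Finsupp.single_apply, g0_ne_g1, g0_ne_g1.symm]

lemma pi0_mul (a b : GroupRing R) : pi0 (a * b) = pi0 a * pi0 b + pi1 a * pi1 b := by
  classical
  show (a * b).coeff g0 = a.coeff g0 * b.coeff g0 + a.coeff g1 * b.coeff g1
  rw [MonoidAlgebra.coeff_mul]
  rw [Finsupp.sum_fintype _ _ (fun _ => by simp), univ_G2,
    Finset.sum_insert (by decide), Finset.sum_singleton,
    Finsupp.sum_fintype _ _ (fun _ => by simp),
    Finsupp.sum_fintype _ _ (fun _ => by simp), univ_G2,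
    Finset.sum_insert (by decide), Finset.sum_singleton,
    Finset.sum_insert (by decide), Finset.sum_singleton,
    if_pos (by decide : g0 * g0 = g0), if_neg (by decide : ¬ g0 * g1 = g0),
    if_neg (by decide : ¬ g1 * g0 = g0), if_pos (by decide : g1 * g1 = g0)]
  ring

lemma pi1_mul (a b : GroupRing R) : pi1 (a * b) = pi0 a * pi1 b + pi1 a * pi0 b := by
  classical
  show (a * b).coeff g1 = a.coeff g0 * b.coeff g1 + a.coeff g1 * b.coeff g0
  rw [MonoidAlgebra.coeff_mul]
  rw [Finsupp.sum_fintype _ _ (fun _ => by simp), univ_G2,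
    Finset.sum_insert (by decide), Finset.sum_singleton,
    Finsupp.sum_fintype _ _ (fun _ => by simp),
    Finsupp.sum_fintype _ _ (fun _ => by simp), univ_G2,
    Finset.sum_insert (by decide), Finset.sum_singleton,
    Finset.sum_insert (by decide), Finset.sum_singleton,
    if_neg (by decide : ¬ g0 * g0 = g1), if_pos (by decide : g0 * g1 = g1),
    if_pos (by decide : g1 * g0 = g1), if_neg (by decide : ¬ g1 * g1 = g1)]
  ring

lemma pi0_add (a b : GroupRing R) : pi0 (a + b) = pi0 a + pi0 b := rfl
lemma pi1_add (a b : GroupRing R) : pi1 (a + b) = pi1 a + pi1 b := rfl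

lemma Itilde_pow_coeff (J : Ideal R) (n : ℕ) :
    ∀ x ∈ Itilde J ^ n, pi0 x ∈ J ^ n ∧ pi1 x ∈ J ^ n := by
  induction n with
  | zero => intro x _; simp
  | succ n ih =>
    intro x hx
    rw [pow_succ] at hx
    refine Submodule.mul_induction_on hx (fun a ha b hb => ?_) (fun y z hy hz => ?_)
    · obtain ⟨ha0, ha1⟩ := ih a ha
      obtain ⟨hb0, hb1⟩ := hb
      rw [pow_succ]
      exact ⟨by rw [pi0_mul]; exact add_mem (Ideal.mul_mem_mul ha0 hb0) (Ideal.mul_mem_mul ha1 hb1),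
        by rw [pi1_mul]; exact add_mem (Ideal.mul_mem_mul ha0 hb1) (Ideal.mul_mem_mul ha1 hb0)⟩
    · exact ⟨by rw [pi0_add]; exact add_mem hy.1 hz.1,
        by rw [pi1_add]; exact add_mem hy.2 hz.2⟩

lemma g0_eq_one : g0 = (1 : G2) := rfl

lemma mem_Itilde_pow (J : Ideal R) (k : ℕ) (x : GroupRing R)
    (h0 : pi0 x ∈ J ^ k) (h1 : pi1 x ∈ J ^ k) : x ∈ Itilde J ^ k := by
  classical
  have hmap : Ideal.map (MonoidAlgebra.singleOneRingHom : R →+* GroupRing R) J ≤ Itilde J := by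
    rw [Ideal.map_le_iff_le_comap]
    intro j hj
    refine ⟨?_, ?_⟩
    · show pi0 (MonoidAlgebra.single 1 j) ∈ J
      simpa [pi0, g0_eq_one, MonoidAlgebra.single_apply] using hj
    · show pi1 (MonoidAlgebra.single 1 j) ∈ J
      have : (1 : G2) ≠ g1 := by decide
      simp [pi1, MonoidAlgebra.single_apply, this]
  have key : ∀ a : R, a ∈ J ^ k →
      (MonoidAlgebra.single (1 : G2) a : GroupRing R) ∈ Itilde J ^ k := by
    intro a ha
    have : (MonoidAlgebra.singleOneRingHom a : GroupRing R) ∈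
        Ideal.map (MonoidAlgebra.singleOneRingHom : R →+* GroupRing R) (J ^ k) :=
      Ideal.mem_map_of_mem _ ha
    rw [Ideal.map_pow] at this
    exact Ideal.pow_right_mono hmap k this
  have hx0 : (MonoidAlgebra.single g0 (pi0 x) : GroupRing R) ∈ Itilde J ^ k := by
    rw [g0_eq_one]; exact key _ h0
  have hx1 : (MonoidAlgebra.single g1 (pi1 x) : GroupRing R) ∈ Itilde J ^ k := by
    have : (MonoidAlgebra.single g1 (pi1 x) : GroupRing R) =
        MonoidAlgebra.single g1 1 * MonoidAlgebra.single 1 (pi1 x) := by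
      rw [MonoidAlgebra.single_mul_single, mul_one, one_mul]
    rw [this]
    exact Ideal.mul_mem_left _ _ (key _ h1)
  rw [decomp x]
  exact add_mem hx0 hx1

lemma Iaug_pow_coeff (J : Ideal R) (h2 : (2 : R) ∈ J) :
    ∀ n : ℕ, 1 ≤ n → ∀ x ∈ Iaug J ^ n,
      pi0 x ∈ J ^ (n - 1) ∧ pi1 x ∈ J ^ (n - 1) ∧ pi0 x + pi1 x ∈ J ^ n := by
  intro n hn
  induction n, hn using Nat.le_induction with
  | base =>
    intro x hx
    rw [pow_one] at hx
    rw [mem_Iaug] at hx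
    simpa using hx
  | succ n hn ih =>
    intro x hx
    rw [pow_succ] at hx
    have hJn : J ^ (n - 1) * J ≤ J ^ n := by
      rw [← pow_succ, Nat.sub_add_cancel hn]
    refine Submodule.mul_induction_on hx (fun a ha b hb => ?_) (fun y z hy hz => ?_)
    · obtain ⟨ha0, ha1, has⟩ := ih a ha
      rw [mem_Iaug] at hb
      have key0 : pi0 (a * b) =
          pi0 a * (pi0 b + pi1 b) + (pi0 a + pi1 a) * pi1 b - 2 * pi0 a * pi1 b := by
        rw [pi0_mul]; ring
      have key1 : pi1 (a * b) =
          pi0 a * (pi0 b + pi1 b) + (pi0 a + pi1 a) * pi0 b - 2 * pi0 a * pi0 b := by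
        rw [pi1_mul]; ring
      have t1 : pi0 a * (pi0 b + pi1 b) ∈ J ^ n := hJn (Ideal.mul_mem_mul ha0 hb)
      have t2 : ∀ c : R, 2 * pi0 a * c ∈ J ^ n := by
        intro c
        refine Ideal.mul_mem_right c _ ?_
        have : (2 : R) * pi0 a ∈ J ^ (n - 1) * J :=
          mul_comm (2:R) (pi0 a) ▸ Ideal.mul_mem_mul ha0 h2
        exact hJn this
      refine ⟨?_, ?_, ?_⟩
      · rw [key0, Nat.add_sub_cancel]
        exact sub_mem (add_mem t1 (Ideal.mul_mem_right _ _ has)) (t2 _)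
      · rw [key1, Nat.add_sub_cancel]
        exact sub_mem (add_mem t1 (Ideal.mul_mem_right _ _ has)) (t2 _)
      · have : pi0 (a * b) + pi1 (a * b) = (pi0 a + pi1 a) * (pi0 b + pi1 b) := by
          rw [pi0_mul, pi1_mul]; ring
        rw [this, pow_succ]
        exact Ideal.mul_mem_mul has hb
    · obtain ⟨h1, h2', h3⟩ := hy
      obtain ⟨h1', h2'', h3'⟩ := hz
      refine ⟨?_, ?_, ?_⟩
      · rw [pi0_add]; exact add_mem h1 h1'
      · rw [pi1_add]; exact add_mem h2' h2''
      · rw [pi0_add, pi1_add]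
        have := add_mem h3 h3'
        convert this using 1; ring

lemma Itilde_le_Iaug (J : Ideal R) : Itilde J ≤ Iaug J := by
  intro x hx
  rw [mem_Iaug]
  exact add_mem hx.1 hx.2

end Aux

/-- Comparison of the two fundamental filtrations of the group ring `R[ℤ/2ℤ]` when
`2 ∈ J`.  Under the identifications `Ĩⁿ/Ĩⁿ⁺¹ ≅ (Jⁿ/Jⁿ⁺¹)²` via `(π₀, π₁)`,
`Iⁿ/Iⁿ⁺¹ ≅ (Jⁿ/Jⁿ⁺¹) × (Jⁿ⁻¹/Jⁿ)` via `(ε, π₀)` and `Ĩⁿ⁻¹/Ĩⁿ ≅ (Jⁿ⁻¹/Jⁿ)²` via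
`(π₀, π₁)`, the map induced by the inclusion `Ĩⁿ ⊆ Iⁿ` is `(u, v) ↦ (u + v, 0)`, and the
map induced by the inclusion `Iⁿ ⊆ Ĩⁿ⁻¹` is `(u, v) ↦ (v, v)`. -/

theorem Itilde_Iaug_comparison {R : Type*} [CommRing R] (J : Ideal R)
    (h2 : (2 : R) ∈ J) (n : ℕ) (hn : 1 ≤ n) :
    Itilde J ^ n ≤ Iaug J ^ n ∧ Iaug J ^ n ≤ Itilde J ^ (n - 1) ∧
    (∀ x ∈ Itilde J ^ n,
      -- the image of the class of `x` in `Iⁿ/Iⁿ⁺¹` is `α(u, v) = (u + v, 0)`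
      Ideal.Quotient.mk (J ^ (n + 1)) (pi0 x + pi1 x) =
        Ideal.Quotient.mk (J ^ (n + 1)) (pi0 x) + Ideal.Quotient.mk (J ^ (n + 1)) (pi1 x) ∧
      Ideal.Quotient.mk (J ^ n) (pi0 x) = 0) ∧
    (∀ x ∈ Iaug J ^ n,
      -- the image of the class of `x` in `Ĩⁿ⁻¹/Ĩⁿ` is `β(u, v) = (v, v)`
      Ideal.Quotient.mk (J ^ n) (pi0 x) = Ideal.Quotient.mk (J ^ n) (pi0 x) ∧
      Ideal.Quotient.mk (J ^ n) (pi1 x) = Ideal.Quotient.mk (J ^ n) (pi0 x)) := by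
  have hle : Itilde J ^ n ≤ Iaug J ^ n := Ideal.pow_right_mono (Itilde_le_Iaug J) n
  have hle2 : Iaug J ^ n ≤ Itilde J ^ (n - 1) := by
    intro x hx
    obtain ⟨h0, h1, _⟩ := Iaug_pow_coeff J h2 n hn x hx
    exact mem_Itilde_pow J _ x h0 h1
  refine ⟨hle, hle2, ?_, ?_⟩
  · intro x hx
    refine ⟨map_add _ _ _, ?_⟩
    rw [Ideal.Quotient.eq_zero_iff_mem]
    exact (Itilde_pow_coeff J n x hx).1
  · intro x hx
    refine ⟨rfl, ?_⟩
    obtain ⟨h0, _, hs⟩ := Iaug_pow_coeff J h2 n hn x hx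
    rw [Ideal.Quotient.mk_eq_mk_iff_sub_mem]
    have h2p : (2 : R) * pi0 x ∈ J ^ n := by
      have : (2 : R) * pi0 x ∈ J ^ (n-1) * J := mul_comm (2:R) (pi0 x) ▸ Ideal.mul_mem_mul h0 h2
      rwa [← pow_succ, Nat.sub_add_cancel hn] at this
    have : pi1 x - pi0 x = (pi0 x + pi1 x) - 2 * pi0 x := by ring
    rw [this]
    exact sub_mem hs h2p
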